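/- Let T be a mixing measure-preserving invertible transformation of a probability space. Then every weak monotone dynamical sequence of integers is weak ergodic with respect to T: for all measurable sets A and B, (1/r_n)∑_{i<r_n} μ(T^{s_{n,i}}(A) ∩ B) → μ(A)μ(B). -/

import Mathlib

open MeasureTheory Filter Finset

/-- Integer iterate of an invertible transformation. -/
noncomputable def iterZ {X : Type*} [MeasurableSpace X] (T : X ≃ᵐ X) (k : ℤ) : X → X :=
  if 0 ≤ k then (⇑T)^[k.toNat] else (⇑T.symm)^[(-k).toNat]

section aux

variable {X : Type*} [MeasurableSpace X] {μ : MeasureTheory.Measure X} (T : X ≃ᵐ X)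

lemma iterZ_natCast (n : ℕ) : iterZ T (n : ℤ) = (⇑T)^[n] := by
  simp [iterZ]

lemma iterZ_neg_natCast (n : ℕ) : iterZ T (-(n : ℤ)) = (⇑T.symm)^[n] := by
  rcases Nat.eq_zero_or_pos n with h | h
  · subst h; simp [iterZ]
  · have h1 : ¬ (0 ≤ -(n : ℤ)) := by omega
    simp only [iterZ, h1, if_false, neg_neg, Int.toNat_natCast]

lemma iterT_image (n : ℕ) (S : Set X) :
    (⇑T)^[n] '' S = (⇑T.symm)^[n] ⁻¹' S :=
  congrFun (Set.image_eq_preimage_of_inverse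
    (Function.LeftInverse.iterate T.symm_apply_apply n)
    (Function.LeftInverse.iterate T.apply_symm_apply n)) S

lemma measure_iterT_image (hT : MeasurePreserving T μ μ) (n : ℕ) {S : Set X}
    (hS : MeasurableSet S) : μ ((⇑T)^[n] '' S) = μ S := by
  rw [iterT_image]
  exact ((hT.symm T).iterate n).measure_preimage hS.nullMeasurableSet

lemma measure_symm_swap (hT : MeasurePreserving T μ μ) (n : ℕ) {A B : Set X}
    (hA : MeasurableSet A) (hB : MeasurableSet B) :
    μ ((⇑T.symm)^[n] '' A ∩ B) = μ ((⇑T)^[n] '' B ∩ A) := by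
  have hinj : Function.Injective ((⇑T)^[n]) := T.injective.iterate n
  have hL : Function.LeftInverse ((⇑T)^[n]) ((⇑T.symm)^[n]) :=
    Function.LeftInverse.iterate T.apply_symm_apply n
  have himg : (⇑T)^[n] '' ((⇑T.symm)^[n] '' A ∩ B) = A ∩ (⇑T)^[n] '' B := by
    rw [Set.image_inter hinj, ← Set.image_comp, hL.comp_eq_id, Set.image_id]
  have hmeas : MeasurableSet ((⇑T.symm)^[n] '' A ∩ B) := by
    have : (⇑T.symm)^[n] '' A = (⇑T)^[n] ⁻¹' A := by
      have := iterT_image T.symm n A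
      simpa using this
    rw [this]
    exact ((T.measurable.iterate n) hA).inter hB
  rw [← measure_iterT_image T hT n hmeas, himg, Set.inter_comm]

end aux

/-- For a mixing measure-preserving invertible transformation of a probability space, every
weak monotone dynamical sequence of integers is weak ergodic with respect to it. -/
theorem mixing_imp_weak_monotone_weak_ergodic
    {X : Type*} [MeasurableSpace X] (μ : Measure X) [IsProbabilityMeasure μ]
    (T : X ≃ᵐ X) (hT : MeasurePreserving T μ μ)
    (hmix : ∀ A B : Set X, MeasurableSet A → MeasurableSet B →
      Tendsto (fun n : ℕ => (μ (iterZ T (n : ℤ) '' A ∩ B)).toReal)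
        atTop (nhds ((μ A).toReal * (μ B).toReal)))
    (r : ℕ → ℕ) (hrtop : Tendsto r atTop atTop)
    (s : ℕ → ℕ → ℤ)
    (hwk : ∀ M : ℕ, 0 < M →
      Tendsto (fun n : ℕ =>
          (((Finset.range (r n)).filter (fun i => |s n i| < (M : ℤ))).card : ℝ) / (r n : ℝ))
        atTop (nhds 0)) :
    ∀ A B : Set X, MeasurableSet A → MeasurableSet B →
      Tendsto (fun n : ℕ =>
          (1 / (r n : ℝ)) * ∑ i ∈ Finset.range (r n), (μ (iterZ T (s n i) '' A ∩ B)).toReal)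
        atTop (nhds ((μ A).toReal * (μ B).toReal)) := by
  intro A B hA hB
  set c : ℝ := (μ A).toReal * (μ B).toReal with hc
  set f : ℤ → ℝ := fun k => (μ (iterZ T k '' A ∩ B)).toReal with hf
  have htoReal_le_one : ∀ S : Set X, (μ S).toReal ≤ 1 := by
    intro S
    have h1 : μ S ≤ 1 := prob_le_one
    have := ENNReal.toReal_mono ENNReal.one_ne_top h1
    simpa using this
  have hf01 : ∀ k, 0 ≤ f k ∧ f k ≤ 1 :=
    fun k => ⟨ENNReal.toReal_nonneg, htoReal_le_one _⟩
  have hc01 : 0 ≤ c ∧ c ≤ 1 := by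
    constructor
    · positivity
    · exact mul_le_one₀ (htoReal_le_one A) ENNReal.toReal_nonneg (htoReal_le_one B)
  have hfc : ∀ k, |f k - c| ≤ 1 := by
    intro k
    rw [abs_sub_le_iff]
    constructor
    · linarith [(hf01 k).2, hc01.1]
    · linarith [(hf01 k).1, hc01.2]
  -- uniform mixing bound for |k| large
  have key : ∀ ε : ℝ, 0 < ε → ∃ M : ℕ, ∀ k : ℤ, (M : ℤ) ≤ |k| → |f k - c| < ε := by
    intro ε hε
    have h1 := hmix A B hA hB
    have h2 := hmix B A hB hA
    rw [Metric.tendsto_atTop] at h1 h2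
    obtain ⟨N1, hN1⟩ := h1 ε hε
    obtain ⟨N2, hN2⟩ := h2 ε hε
    refine ⟨max N1 N2, fun k hk => ?_⟩
    rcases le_or_gt 0 k with hk0 | hk0
    · rw [abs_of_nonneg hk0] at hk
      have hN : N1 ≤ k.toNat := by omega
      have h := hN1 k.toNat hN
      rw [Real.dist_eq] at h
      have hkn : ((k.toNat : ℕ) : ℤ) = k := Int.toNat_of_nonneg hk0
      rw [hf]
      rw [← hkn]
      exact h
    · rw [abs_of_neg hk0] at hk
      set m := (-k).toNat with hm
      have hN : N2 ≤ m := by omega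
      have h := hN2 m hN
      rw [Real.dist_eq] at h
      have hkm : k = -((m : ℕ) : ℤ) := by omega
      have heq : f k = (μ (iterZ T (m : ℤ) '' B ∩ A)).toReal := by
        rw [hf]
        simp only
        rw [hkm, iterZ_neg_natCast, iterZ_natCast,
          measure_symm_swap T hT m hA hB]
      rw [heq, hc, mul_comm]
      exact h
  -- final epsilon argument
  rw [Metric.tendsto_atTop]
  intro ε hε
  obtain ⟨M, hM⟩ := key (ε / 2) (half_pos hε)
  have hwk' := hwk (M + 1) (Nat.succ_pos M)
  rw [Metric.tendsto_atTop] at hwk'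
  obtain ⟨N1, hN1⟩ := hwk' (ε / 2) (half_pos hε)
  obtain ⟨N2, hN2⟩ := Filter.eventually_atTop.1 (hrtop.eventually_ge_atTop 1)
  refine ⟨max N1 N2, fun n hn => ?_⟩
  have hR1 : 1 ≤ r n := hN2 n (le_of_max_le_right hn)
  have hRpos : (0 : ℝ) < (r n : ℝ) := by exact_mod_cast Nat.lt_of_lt_of_le Nat.zero_lt_one hR1
  have hcount := hN1 n (le_of_max_le_left hn)
  rw [Real.dist_eq, sub_zero] at hcount
  set bad := (Finset.range (r n)).filter (fun i => |s n i| < ((M + 1 : ℕ) : ℤ)) with hbad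
  set good := (Finset.range (r n)).filter (fun i => ¬ |s n i| < ((M + 1 : ℕ) : ℤ)) with hgood
  have hcount' : (bad.card : ℝ) / (r n : ℝ) < ε / 2 := by
    have : |(bad.card : ℝ) / (r n : ℝ)| = (bad.card : ℝ) / (r n : ℝ) :=
      abs_of_nonneg (by positivity)
    rw [← this]; exact hcount
  rw [Real.dist_eq]
  have hsplit : (1 / (r n : ℝ)) * ∑ i ∈ Finset.range (r n), f (s n i) - c
      = (1 / (r n : ℝ)) * ∑ i ∈ Finset.range (r n), (f (s n i) - c) := by
    rw [Finset.sum_sub_distrib, Finset.sum_const, card_range, mul_sub]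
    congr 1
    field_simp
    rw [nsmul_eq_mul, mul_comm]
  calc |(1 / (r n : ℝ)) * ∑ i ∈ Finset.range (r n), f (s n i) - c|
      = (1 / (r n : ℝ)) * |∑ i ∈ Finset.range (r n), (f (s n i) - c)| := by
        rw [hsplit, abs_mul, abs_of_nonneg (by positivity : (0:ℝ) ≤ 1 / (r n : ℝ))]
    _ ≤ (1 / (r n : ℝ)) * ∑ i ∈ Finset.range (r n), |f (s n i) - c| := by
        gcongr
        exact Finset.abs_sum_le_sum_abs _ _
    _ = (1 / (r n : ℝ)) * (∑ i ∈ bad, |f (s n i) - c| + ∑ i ∈ good, |f (s n i) - c|) := by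
        rw [Finset.sum_filter_add_sum_filter_not]
    _ ≤ (1 / (r n : ℝ)) * ((bad.card : ℝ) * 1 + (r n : ℝ) * (ε / 2)) := by
        have hb : ∑ i ∈ bad, |f (s n i) - c| ≤ (bad.card : ℝ) * 1 := by
          calc ∑ i ∈ bad, |f (s n i) - c| ≤ ∑ _i ∈ bad, (1 : ℝ) :=
                Finset.sum_le_sum (fun i _ => hfc (s n i))
            _ = (bad.card : ℝ) * 1 := by rw [Finset.sum_const]; simp
        have hg : ∑ i ∈ good, |f (s n i) - c| ≤ (r n : ℝ) * (ε / 2) := by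
          calc ∑ i ∈ good, |f (s n i) - c| ≤ ∑ _i ∈ good, (ε / 2) := by
                refine Finset.sum_le_sum (fun i hi => ?_)
                rw [hgood, Finset.mem_filter] at hi
                have hle : ((M : ℕ) : ℤ) ≤ |s n i| := by
                  push_neg at hi
                  have := hi.2
                  omega
                exact le_of_lt (hM (s n i) hle)
            _ = (good.card : ℝ) * (ε / 2) := by rw [Finset.sum_const]; simp [mul_comm]
            _ ≤ (r n : ℝ) * (ε / 2) := by
                have hcard : (good.card : ℝ) ≤ (r n : ℝ) := by
                  exact_mod_cast (Finset.card_le_card (Finset.filter_subset _ _)).trans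
                    (le_of_eq (card_range (r n)))
                nlinarith [half_pos hε]
        exact mul_le_mul_of_nonneg_left (add_le_add hb hg) (by positivity)
    _ = (bad.card : ℝ) / (r n : ℝ) + ε / 2 := by field_simp
    _ < ε / 2 + ε / 2 := by linarith
    _ = ε := by ring
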